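/- arXiv:1803.10802 — 5 statements merged into one kernel-verified Lean document; each statement's English description precedes it below -/
import Mathlib

section
/- For a prime p and t ∈ p·ℤ_p, the function f : ℤ_p → ℚ_p defined on nonnegative integers n by f(n) = ∑_{k=1}^{n} C(n,k) t^{k-1} / C(2k,k) extends to a continuous function on ℤ_p; equivalently, the Mahler coefficients t^{k-1}/C(2k,k) tend to 0 in ℚ_p as k → ∞. -/
open Filter

private lemma mahler_coeff_tendsto (p : ℕ) [Fact p.Prime] (t : ℤ_[p])
    (ht : (p : ℤ_[p]) ∣ t) :
    Tendsto (fun k : ℕ => (t : ℚ_[p]) ^ (k - 1) / (Nat.choose (2 * k) k : ℚ_[p]))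
      atTop (nhds 0) := by
  have hp1 : (1 : ℝ) < p := by exact_mod_cast (Fact.out : p.Prime).one_lt
  have hp0 : (0 : ℝ) < p := lt_trans one_pos hp1
  -- ‖t‖ ≤ p⁻¹
  have htn : ‖t‖ ≤ (p : ℝ)⁻¹ := by
    obtain ⟨s, rfl⟩ := ht
    calc ‖(p : ℤ_[p]) * s‖ = ‖(p : ℤ_[p])‖ * ‖s‖ := norm_mul _ _
    _ ≤ (p : ℝ)⁻¹ * 1 := by
        refine mul_le_mul ?_ s.norm_le_one (norm_nonneg _) (by positivity)
        rw [PadicInt.norm_p]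
    _ = (p : ℝ)⁻¹ := mul_one _
  rw [tendsto_zero_iff_norm_tendsto_zero]
  have key : Tendsto (fun k : ℕ => (2 * p : ℝ) * ((k : ℝ) * ((p : ℝ)⁻¹) ^ k))
      atTop (nhds 0) := by
    have := (tendsto_self_mul_const_pow_of_lt_one (r := (p : ℝ)⁻¹)
      (by positivity) (inv_lt_one_of_one_lt₀ hp1)).const_mul (2 * p : ℝ)
    simpa using this
  refine squeeze_zero' (Eventually.of_forall fun k => norm_nonneg _) ?_ key
  filter_upwards [eventually_ge_atTop 1] with k hk
  have hC0 : (0 : ℕ) < Nat.choose (2 * k) k := Nat.choose_pos (by omega)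
  have hCne : ((Nat.choose (2 * k) k : ℚ_[p])) ≠ 0 := by
    exact_mod_cast Nat.cast_ne_zero.mpr hC0.ne'
  -- norm of the binomial coefficient
  have hCnorm : ‖(Nat.choose (2 * k) k : ℚ_[p])‖⁻¹ ≤ (2 * k : ℝ) := by
    have hv : (p : ℕ) ^ padicValNat p (Nat.choose (2 * k) k) ≤ 2 * k := by
      have := Nat.pow_factorization_choose_le (p := p) (n := 2 * k) (k := k) (by omega)
      rwa [Nat.factorization_def _ Fact.out] at this
    rw [Padic.norm_eq_zpow_neg_valuation hCne, Padic.valuation_natCast, zpow_neg, inv_inv]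
    calc (p : ℝ) ^ (padicValNat p (Nat.choose (2 * k) k) : ℤ)
        = ((p ^ padicValNat p (Nat.choose (2 * k) k) : ℕ) : ℝ) := by
          rw [zpow_natCast]; push_cast; ring
      _ ≤ ((2 * k : ℕ) : ℝ) := by exact_mod_cast hv
      _ = (2 * k : ℝ) := by push_cast; ring
  have htk : ‖(t : ℚ_[p]) ^ (k - 1)‖ ≤ ((p : ℝ)⁻¹) ^ (k - 1) := by
    rw [norm_pow]
    exact pow_le_pow_left₀ (norm_nonneg _) (by rwa [PadicInt.padic_norm_e_of_padicInt]) _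
  calc ‖(t : ℚ_[p]) ^ (k - 1) / (Nat.choose (2 * k) k : ℚ_[p])‖
      = ‖(t : ℚ_[p]) ^ (k - 1)‖ * ‖(Nat.choose (2 * k) k : ℚ_[p])‖⁻¹ := by
        rw [norm_div, div_eq_mul_inv]
    _ ≤ ((p : ℝ)⁻¹) ^ (k - 1) * (2 * k : ℝ) := by
        refine mul_le_mul htk hCnorm (by positivity) (by positivity)
    _ = (2 * p : ℝ) * ((k : ℝ) * ((p : ℝ)⁻¹) ^ k) := by
        have : ((p : ℝ)⁻¹) ^ (k - 1) = (p : ℝ) * ((p : ℝ)⁻¹) ^ k := by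
          rw [← pow_sub_one_mul (by omega : k ≠ 0) ((p : ℝ)⁻¹)]
          field_simp
        rw [this]; ring

/-- For a prime `p` and `t ∈ p·ℤ_p`, the function given on nonnegative integers `n` by
`f(n) = ∑_{k=1}^{n} C(n,k) t^{k-1} / C(2k,k)` extends to a continuous function on `ℤ_p`;
equivalently the Mahler coefficients `t^{k-1}/C(2k,k)` tend to `0` in `ℚ_p`. -/
theorem stmt_3 (p : ℕ) [Fact p.Prime] (t : ℤ_[p]) (ht : (p : ℤ_[p]) ∣ t) :
    (∃ f : C(ℤ_[p], ℚ_[p]), ∀ n : ℕ,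
        f (n : ℤ_[p]) = ∑ k ∈ Finset.Icc 1 n,
          (Nat.choose n k : ℚ_[p]) * (t : ℚ_[p]) ^ (k - 1) /
            (Nat.choose (2 * k) k : ℚ_[p])) ∧
      Tendsto (fun k : ℕ => (t : ℚ_[p]) ^ (k - 1) / (Nat.choose (2 * k) k : ℚ_[p]))
        atTop (nhds 0) := by
  have htend := mahler_coeff_tendsto p t ht
  refine ⟨?_, htend⟩
  set a : ℕ → ℚ_[p] := fun k =>
    if k = 0 then 0 else (t : ℚ_[p]) ^ (k - 1) / (Nat.choose (2 * k) k : ℚ_[p]) with ha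
  have ha0 : Tendsto a atTop (nhds 0) := by
    refine htend.congr' ?_
    filter_upwards [eventually_ge_atTop 1] with k hk
    simp [ha, Nat.one_le_iff_ne_zero.mp hk]
  haveI : IsBoundedSMul ℤ_[p] ℚ_[p] := IsBoundedSMul.of_norm_smul_le fun r x =>
    le_of_eq (by rw [Algebra.smul_def, norm_mul]; rfl)
  refine ⟨PadicInt.mahlerSeries a, fun n => ?_⟩
  rw [PadicInt.mahlerSeries_apply_nat ha0 le_rfl]
  have hins : Finset.range (n + 1) = insert 0 (Finset.Icc 1 n) := by
    ext i; simp only [Finset.mem_range, Finset.mem_insert, Finset.mem_Icc]; omega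
  rw [hins, Finset.sum_insert (by simp)]
  have : a 0 = 0 := by simp [ha]
  rw [this, smul_zero, zero_add]
  refine Finset.sum_congr rfl fun i hi => ?_
  have hi1 : i ≠ 0 := by
    rw [Finset.mem_Icc] at hi; omega
  simp only [ha, if_neg hi1, nsmul_eq_mul, mul_div_assoc]
end

section
/- As formal power series in z with w = 1 - z, one has the identity ∑_{k≥1} (1/C(2k,k)) C(x,k) ((w - w^{-1})²)^{k-1}, expanded as ∑_{n≥0} b_n((w-w^{-1})²) xⁿ, satisfies b₁((w - w^{-1})²) = (w² - w^{-2})^{-1} · log(w²), where log(w²) = -2∑_{m≥1} z'^m/m with w² = 1 - z' (i.e. the usual formal logarithm of w² around 1). -/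
/-- `w = 1 - z` as a formal power series in `z` over `ℚ`. -/
noncomputable def wPS : PowerSeries ℚ := 1 - PowerSeries.X

/-- The formal logarithm `log(w²) = -∑_{m≥1} z'^m/m` where `w² = 1 - z'`,
defined coefficientwise (the coefficient of `zⁿ` only involves terms with `m ≤ n`,
since `z' = 1 - w²` has zero constant term). -/
noncomputable def logwSq : PowerSeries ℚ :=
  PowerSeries.mk fun n =>
    PowerSeries.coeff (R := ℚ) n (∑ m ∈ Finset.Icc 1 n, (-(1 : ℚ) / m) • (1 - wPS ^ 2) ^ m)

namespace Stmt5Aux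
open PowerSeries

lemma hw0 : constantCoeff (R := ℚ) wPS = 1 := by simp [wPS]

lemma hunit : wPS * wPS⁻¹ = 1 :=
  PowerSeries.mul_inv_cancel _ (by rw [hw0]; norm_num)

lemma dW : d⁄dX ℚ wPS = -1 := by
  rw [wPS, map_sub]
  simp

lemma dWi : d⁄dX ℚ (wPS⁻¹) = wPS⁻¹ ^ 2 := by
  rw [PowerSeries.derivative_inv', dW]
  ring

/-- `t = (w - w⁻¹)²`. -/
noncomputable def t : ℚ⟦X⟧ := (wPS - wPS⁻¹) ^ 2

lemma hA2 : (wPS ^ 2 - wPS⁻¹ ^ 2) ^ 2 = t ^ 2 + 4 * t := by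
  unfold t
  linear_combination (4 * (wPS - wPS⁻¹) ^ 2) * hunit

lemma hwdt : wPS * d⁄dX ℚ t = -2 * (wPS ^ 2 - wPS⁻¹ ^ 2) := by
  have h : d⁄dX ℚ t = (wPS - wPS⁻¹) • d⁄dX ℚ (wPS - wPS⁻¹) + (wPS - wPS⁻¹) • d⁄dX ℚ (wPS - wPS⁻¹) := by
    rw [t, sq]; exact Derivation.leibniz _ _ _
  rw [h, map_sub, dW, dWi]; simp only [smul_eq_mul]
  linear_combination (2 * wPS⁻¹ ^ 2 - 2 * wPS * wPS⁻¹) * hunit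

end Stmt5Aux

namespace Stmt5Aux
open PowerSeries

lemma dsq (f : ℚ⟦X⟧) : d⁄dX ℚ (f ^ 2) = 2 * f * d⁄dX ℚ f := by
  rw [sq, Derivation.leibniz]
  simp only [smul_eq_mul]
  ring

lemma dA : d⁄dX ℚ (wPS ^ 2 - wPS⁻¹ ^ 2) = -2 * wPS - 2 * wPS⁻¹ ^ 3 := by
  rw [map_sub, dsq, dsq, dW, dWi]
  ring

lemma wdAt (K : ℕ) : wPS * d⁄dX ℚ ((wPS ^ 2 - wPS⁻¹ ^ 2) * t ^ K)
    = -((2 * (K : ℚ) + 2) • t ^ (K + 1)) - (4 * (2 * (K : ℚ) + 1)) • t ^ K := by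
  induction K with
  | zero =>
    rw [pow_zero, mul_one, dA]
    norm_num [smul_eq_C_mul, map_ofNat, t]
    linear_combination (-2 * wPS⁻¹ ^ 2 - 4) * hunit
  | succ K ih =>
    have hre : (wPS ^ 2 - wPS⁻¹ ^ 2) * t ^ (K + 1) = ((wPS ^ 2 - wPS⁻¹ ^ 2) * t ^ K) * t := by
      rw [pow_succ t K, mul_assoc]
    have hd : d⁄dX ℚ (((wPS ^ 2 - wPS⁻¹ ^ 2) * t ^ K) * t)
        = ((wPS ^ 2 - wPS⁻¹ ^ 2) * t ^ K) • d⁄dX ℚ t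
          + t • d⁄dX ℚ ((wPS ^ 2 - wPS⁻¹ ^ 2) * t ^ K) := Derivation.leibniz _ _ _
    have key : wPS * d⁄dX ℚ ((wPS ^ 2 - wPS⁻¹ ^ 2) * t ^ (K + 1))
        = ((wPS ^ 2 - wPS⁻¹ ^ 2) * t ^ K) * (wPS * d⁄dX ℚ t)
          + t * (wPS * d⁄dX ℚ ((wPS ^ 2 - wPS⁻¹ ^ 2) * t ^ K)) := by
      rw [hre, hd]
      simp only [smul_eq_mul]
      ring
    rw [key, hwdt, ih]
    simp only [smul_eq_C_mul, Nat.cast_succ]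
    simp only [map_add, map_mul, map_ofNat, map_natCast, map_one]
    linear_combination (-2 * t ^ K) * hA2

end Stmt5Aux

namespace Stmt5Aux
open PowerSeries

/-- the coefficient `(-1)^{k-1}/(k C(2k,k))`. -/
noncomputable def c (k : ℕ) : ℚ := (-1 : ℚ) ^ (k - 1) / (k * Nat.choose (2 * k) k)

lemma chooseRec (K : ℕ) :
    (K + 1) * Nat.choose (2 * K + 2) (K + 1) = 2 * ((2 * K + 1) * Nat.choose (2 * K) K) := by
  have h1 : (2 * K + 2) * Nat.choose (2 * K + 1) K = Nat.choose (2 * K + 2) (K + 1) * (K + 1) :=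
    Nat.add_one_mul_choose_eq (2 * K + 1) K
  have h2 : (2 * K + 1) * Nat.choose (2 * K) K = Nat.choose (2 * K + 1) (K + 1) * (K + 1) :=
    Nat.add_one_mul_choose_eq (2 * K) K
  have h3 : Nat.choose (2 * K + 1) K = Nat.choose (2 * K + 1) (K + 1) := by
    have := Nat.choose_symm (n := 2 * K + 1) (k := K + 1) (by omega)
    rw [show 2 * K + 1 - (K + 1) = K by omega] at this
    omega
  have hpos : 0 < K + 1 := Nat.succ_pos K
  nlinarith [h1, h2, h3]

lemma cRec (j : ℕ) : 2 * ((j : ℚ) + 1) * c (j + 1) + 4 * (2 * ((j : ℚ) + 1) + 1) * c (j + 2) = 0 := by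
  have hch := chooseRec (j + 1)
  have hc1 : (0 : ℚ) < (Nat.choose (2 * (j + 1)) (j + 1) : ℚ) := by
    exact_mod_cast Nat.choose_pos (by omega)
  have hc2 : (0 : ℚ) < (Nat.choose (2 * (j + 2)) (j + 2) : ℚ) := by
    exact_mod_cast Nat.choose_pos (by omega)
  have hchq : ((j : ℚ) + 2) * (Nat.choose (2 * (j + 2)) (j + 2) : ℚ)
      = 2 * ((2 * (j : ℚ) + 3) * (Nat.choose (2 * (j + 1)) (j + 1) : ℚ)) := by
    have : ((j + 2) * Nat.choose (2 * (j + 1) + 2) (j + 2) : ℚ)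
        = 2 * ((2 * (j + 1) + 1) * Nat.choose (2 * (j + 1)) (j + 1)) := by exact_mod_cast hch
    rw [show 2 * (j + 2) = 2 * (j + 1) + 2 by ring]
    push_cast at this ⊢
    linarith [this]
  unfold c
  simp only [Nat.add_sub_cancel, pow_succ]
  push_cast
  have hj1 : ((j : ℚ) + 1) ≠ 0 := by positivity
  have hj2 : ((j : ℚ) + 2) ≠ 0 := by positivity
  field_simp
  linear_combination (2 * (-1 : ℚ) ^ j) * hchq

end Stmt5Aux

namespace Stmt5Aux
open PowerSeries

noncomputable def Hser (K : ℕ) : ℚ⟦X⟧ :=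
  (wPS ^ 2 - wPS⁻¹ ^ 2) * ∑ k ∈ Finset.Icc 1 K, c k • t ^ (k - 1)

lemma c1 : c 1 = 1 / 2 := by
  unfold c
  norm_num

lemma lemA (K : ℕ) : wPS * d⁄dX ℚ (Hser K)
    = (if K = 0 then 0 else -2) - (2 * (K : ℚ) * c K) • t ^ K := by
  induction K with
  | zero =>
    rw [Hser]
    simp
  | succ K ih =>
    have hsum : Hser (K + 1) = Hser K + c (K + 1) • ((wPS ^ 2 - wPS⁻¹ ^ 2) * t ^ K) := by
      rw [Hser, Hser, Finset.sum_Icc_succ_top (by omega : 1 ≤ K + 1), mul_add,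
        Nat.add_sub_cancel, mul_smul_comm]
    rw [hsum, map_add, Derivation.map_smul, mul_add, mul_smul_comm, wdAt, ih]
    rcases K with _ | j
    · norm_num [c1, pow_zero, pow_one]
      rw [smul_sub, smul_neg, smul_smul, smul_smul]
      norm_num [smul_eq_C_mul, map_ofNat]
      ring
    · have h0 := cRec j
      simp only [if_neg (Nat.succ_ne_zero _), Nat.cast_succ]
      match_scalars <;> push_cast <;>
        first
          | ring1
          | linear_combination -h0
          | linear_combination (-2 : ℚ) * h0
          | linear_combination h0
          | linear_combination (2 : ℚ) * h0

end Stmt5Aux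

namespace Stmt5Aux
open PowerSeries

noncomputable def q : ℚ⟦X⟧ := 1 - wPS ^ 2

noncomputable def Mser (K : ℕ) : ℚ⟦X⟧ := ∑ m ∈ Finset.Icc 1 K, (-(1 : ℚ) / m) • q ^ m

lemma dq : d⁄dX ℚ q = 2 * wPS := by
  rw [q, map_sub, dsq, dW]
  simp

lemma lemB (K : ℕ) : wPS * d⁄dX ℚ (Mser K) = -2 + 2 * q ^ K := by
  induction K with
  | zero =>
    rw [Mser]
    simp
  | succ K ih =>
    have hsum : Mser (K + 1) = Mser K + (-(1 : ℚ) / (K + 1)) • q ^ (K + 1) := by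
      rw [Mser, Mser, Finset.sum_Icc_succ_top (by omega : 1 ≤ K + 1)]
      norm_num
    have hdq : d⁄dX ℚ (q ^ (K + 1)) = (K + 1 : ℚ⟦X⟧) * (q ^ K * (2 * wPS)) := by
      rw [Derivation.leibniz_pow, dq]
      simp only [Nat.add_sub_cancel, smul_eq_mul, nsmul_eq_mul]
      push_cast
      ring
    have hK : ((K : ℚ) + 1) ≠ 0 := by positivity
    have hCC : C (-(1 : ℚ) / (K + 1)) * C ((K : ℚ) + 1) = -1 := by
      rw [← map_mul, show (-(1 : ℚ) / (K + 1)) * ((K : ℚ) + 1) = -1 by field_simp]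
      simp
    have hscal : (-(1 : ℚ) / ((K : ℚ) + 1)) • (wPS * ((K + 1 : ℚ⟦X⟧) * (q ^ K * (2 * wPS))))
        = -(2 * wPS ^ 2 * q ^ K) := by
      rw [smul_eq_C_mul, show ((K : ℚ⟦X⟧) + 1) = C ((K : ℚ) + 1) by simp]
      linear_combination (2 * wPS ^ 2 * q ^ K) * hCC
    rw [hsum, map_add, Derivation.map_smul, hdq, mul_add, mul_smul_comm, hscal, ih]
    have hw2 : wPS ^ 2 = 1 - q := by rw [q]; ring
    calc -2 + 2 * q ^ K + -(2 * wPS ^ 2 * q ^ K)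
        = -2 + 2 * q ^ K - 2 * (wPS ^ 2) * q ^ K := by ring
      _ = -2 + 2 * q ^ (K + 1) := by rw [hw2]; ring

end Stmt5Aux

namespace Stmt5Aux
open PowerSeries

lemma haX : wPS - wPS⁻¹ = X * ((X - 2) * wPS⁻¹) := by
  have h2 : wPS ^ 2 - 1 = X * (X - 2) := by rw [wPS]; ring
  have h3 : wPS - wPS⁻¹ = (wPS ^ 2 - 1) * wPS⁻¹ := by linear_combination (-wPS) * hunit
  rw [h3, h2, mul_assoc]

lemma hqX : q = X * (2 - X) := by rw [q, wPS]; ring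

lemma coeff_zero_of_dvd {n m : ℕ} {f : ℚ⟦X⟧} (h : (X : ℚ⟦X⟧) ^ m ∣ f) (hn : n < m) :
    coeff (R := ℚ) n f = 0 := (PowerSeries.X_pow_dvd_iff.mp h) n hn

lemma dvd_tpow (k : ℕ) (g : ℚ⟦X⟧) : (X : ℚ⟦X⟧) ^ (2 * k) ∣ g * t ^ k :=
  ⟨g * ((X - 2) * wPS⁻¹) ^ (2 * k), by
    rw [t, haX, mul_pow]; rw [mul_pow, ← pow_mul, ← pow_mul, show 2 * k = k * 2 by ring]; ring⟩

lemma dvd_qpow (m : ℕ) : (X : ℚ⟦X⟧) ^ m ∣ q ^ m := ⟨(2 - X) ^ m, by rw [hqX, mul_pow]⟩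

lemma Hser_succ (K : ℕ) :
    Hser (K + 1) = Hser K + c (K + 1) • ((wPS ^ 2 - wPS⁻¹ ^ 2) * t ^ K) := by
  rw [Hser, Hser, Finset.sum_Icc_succ_top (by omega : 1 ≤ K + 1), mul_add,
    Nat.add_sub_cancel, mul_smul_comm]

lemma Mser_succ (K : ℕ) : Mser (K + 1) = Mser K + (-(1 : ℚ) / ((K : ℚ) + 1)) • q ^ (K + 1) := by
  rw [Mser, Mser, Finset.sum_Icc_succ_top (by omega : 1 ≤ K + 1)]
  norm_num

lemma stabH {n K K' : ℕ} (h1 : n + 1 ≤ K) (h2 : K ≤ K') :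
    coeff (R := ℚ) n (Hser K') = coeff (R := ℚ) n (Hser K) := by
  induction K', h2 using Nat.le_induction with
  | base => rfl
  | succ K' hKK' ih =>
    rw [Hser_succ, map_add, coeff_smul, coeff_zero_of_dvd (dvd_tpow K' _) (by omega),
      smul_zero, add_zero, ih]

lemma stabM {n K : ℕ} (h : n ≤ K) : coeff (R := ℚ) n (Mser K) = coeff (R := ℚ) n (Mser n) := by
  induction K, h using Nat.le_induction with
  | base => rfl
  | succ K hK ih =>
    rw [Mser_succ, map_add, coeff_smul, coeff_zero_of_dvd (dvd_qpow (K + 1)) (by omega),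
      smul_zero, add_zero, ih]

end Stmt5Aux

namespace Stmt5Aux
open PowerSeries

noncomputable def gseq (n : ℕ) : ℚ := coeff (R := ℚ) n (Hser (n + 1))

lemma coeff_neg_two (n : ℕ) : coeff (R := ℚ) n (-2 : ℚ⟦X⟧) = if n = 0 then (-2 : ℚ) else 0 := by
  have : (-2 : ℚ⟦X⟧) = C (-2) := by rw [map_neg, map_ofNat]
  rw [this, coeff_C]

lemma coeff_w_mul (n : ℕ) (f : ℚ⟦X⟧) :
    coeff (R := ℚ) n (wPS * f) = coeff (R := ℚ) n f - coeff (R := ℚ) n (X * f) := by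
  rw [show wPS * f = f - X * f by rw [wPS]; ring, map_sub]

lemma recg (n : ℕ) :
    ((n : ℚ) + 1) * gseq (n + 1) = (n : ℚ) * gseq n + (if n = 0 then -2 else 0) := by
  have e1 : gseq (n + 1) = coeff (R := ℚ) (n + 1) (Hser (n + 3)) := (stabH (by omega) (by omega)).symm
  have e2 : gseq n = coeff (R := ℚ) n (Hser (n + 3)) := (stabH (by omega) (by omega)).symm
  have htK : coeff (R := ℚ) n (t ^ (n + 3)) = 0 :=
    coeff_zero_of_dvd (by simpa using dvd_tpow (n + 3) 1) (by omega)
  have hA := congrArg (coeff (R := ℚ) n) (lemA (n + 3))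
  rw [if_neg (by omega), map_sub, coeff_smul, htK,
    smul_zero, sub_zero, coeff_w_mul, coeff_neg_two, PowerSeries.coeff_derivative] at hA
  rcases n with _ | m
  · rw [coeff_zero_X_mul] at hA
    rw [e1]
    push_cast
    simpa using hA
  · rw [coeff_succ_X_mul, PowerSeries.coeff_derivative, if_neg (Nat.succ_ne_zero m)] at hA
    rw [e1, e2, if_neg (Nat.succ_ne_zero m)]
    push_cast at hA ⊢
    linarith [hA]

noncomputable def lseq (n : ℕ) : ℚ := coeff (R := ℚ) n (Mser n)

lemma coeff_rhsB (n K : ℕ) (h : n < K) :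
    coeff (R := ℚ) n (-2 + 2 * q ^ K) = if n = 0 then (-2 : ℚ) else 0 := by
  have hq0 : coeff (R := ℚ) n (2 * q ^ K) = 0 :=
    coeff_zero_of_dvd ((dvd_qpow K).mul_left 2) h
  rw [map_add, coeff_neg_two, hq0, add_zero]
lemma recl (n : ℕ) :
    ((n : ℚ) + 1) * lseq (n + 1) = (n : ℚ) * lseq n + (if n = 0 then -2 else 0) := by
  have e1 : lseq (n + 1) = coeff (R := ℚ) (n + 1) (Mser (n + 2)) := (stabM (by omega)).symm
  have e2 : lseq n = coeff (R := ℚ) n (Mser (n + 2)) := (stabM (by omega)).symm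
  have hB := congrArg (coeff (R := ℚ) n) (lemB (n + 2))
  rw [coeff_rhsB n (n + 2) (by omega), coeff_w_mul, PowerSeries.coeff_derivative] at hB
  rcases n with _ | m
  · rw [coeff_zero_X_mul] at hB
    rw [e1]
    push_cast
    simpa using hB
  · rw [coeff_succ_X_mul, PowerSeries.coeff_derivative, if_neg (Nat.succ_ne_zero m)] at hB
    rw [e1, e2, if_neg (Nat.succ_ne_zero m)]
    push_cast at hB ⊢
    linarith [hB]

lemma g0 : gseq 0 = 0 := by
  rw [gseq, Hser]
  rw [coeff_zero_eq_constantCoeff, map_mul]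
  have : constantCoeff (R := ℚ) (wPS ^ 2 - wPS⁻¹ ^ 2) = 0 := by
    rw [map_sub, map_pow, map_pow, hw0, PowerSeries.constantCoeff_inv, hw0]
    norm_num
  rw [this, zero_mul]

lemma l0 : lseq 0 = 0 := by
  rw [lseq, Mser]
  simp

lemma gl (n : ℕ) : gseq n = lseq n := by
  induction n with
  | zero => rw [g0, l0]
  | succ m ih =>
    have h1 := recg m
    have h2 := recl m
    rw [ih] at h1
    have hm : ((m : ℚ) + 1) ≠ 0 := by positivity
    have := h1.trans h2.symm
    exact mul_left_cancel₀ hm this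

end Stmt5Aux



/-- As formal power series in `z` with `w = 1 - z`, the coefficient `b₁` of `x` in
`∑_{k≥1} C(x,k)/C(2k,k) ((w - w⁻¹)²)^{k-1}` satisfies
`b₁((w - w⁻¹)²) = (w² - w⁻²)⁻¹ log(w²)`, stated (after clearing the non-invertible
factor `w² - w⁻²`) coefficientwise; the coefficient of `zⁿ` of the infinite sum over
`k` only involves the terms with `k ≤ n + 1`, since `(w - w⁻¹)²` has zero constant
term.  Here `b₁(t) = ∑_{k≥1} (-1)^{k-1} t^{k-1}/(k·C(2k,k))`. -/
theorem stmt_5 (n : ℕ) :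
    PowerSeries.coeff (R := ℚ) n
        ((wPS ^ 2 - (wPS⁻¹) ^ 2) *
          ∑ k ∈ Finset.Icc 1 (n + 1),
            (((-1 : ℚ) ^ (k - 1) / (k * Nat.choose (2 * k) k)) •
              ((wPS - wPS⁻¹) ^ 2) ^ (k - 1))) =
      PowerSeries.coeff (R := ℚ) n logwSq := by
  have h := Stmt5Aux.gl n
  rw [Stmt5Aux.gseq, Stmt5Aux.lseq] at h
  simp only [Stmt5Aux.Hser, Stmt5Aux.Mser, Stmt5Aux.t, Stmt5Aux.q, Stmt5Aux.c] at h
  rw [logwSq, PowerSeries.coeff_mk]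
  exact h
end

section
/- The sequence C(2·3^s, 3^s) (s = 0, 1, 2, …) converges in ℤ₃; more generally, for any prime p, the sequence C(2p^s, p^s) converges in ℤ_p as s → ∞. -/
open Filter

open Finset

lemma asc_prod (m : ℕ) : ∀ k, m.ascFactorial k = ∏ i ∈ range k, (m + i)
  | 0 => by simp
  | k + 1 => by rw [Nat.ascFactorial_succ, prod_range_succ, asc_prod m k, mul_comm]

lemma choose_prod (n : ℕ) : (2*n).choose n * n.factorial = ∏ k ∈ Icc 1 n, (n + k) := by
  have h := Nat.choose_mul_factorial_mul_factorial (show n ≤ 2*n by omega)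
  have h2 := Nat.factorial_mul_ascFactorial n n
  have h3 : (n+1).ascFactorial n = ∏ k ∈ Icc 1 n, (n + k) := by
    rw [asc_prod]
    rw [Finset.prod_bij (fun i _ => i + 1)]
    · intro a ha; simp at ha ⊢; omega
    · intro a ha b hb; omega
    · intro b hb; simp at hb; exact ⟨b - 1, by simp; omega, by omega⟩
    · intro a ha; omega
  apply Nat.eq_of_mul_eq_mul_right (Nat.factorial_pos n)
  rw [← h3, mul_comm ((n+1).ascFactorial n), h2]
  rw [two_mul] at h
  have h4 : (n + n - n) = n := by omega
  rw [h4] at h; rw [two_mul]; exact h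

lemma split_prod (p m : ℕ) (hp : 0 < p) (f : ℕ → ℕ) :
    ∏ k ∈ Icc 1 (p*m), f k
      = (∏ j ∈ Icc 1 m, f (p*j)) * ∏ k ∈ (Icc 1 (p*m)).filter (fun k => ¬ p ∣ k), f k := by
  rw [← Finset.prod_filter_mul_prod_filter_not (Icc 1 (p*m)) (fun k => p ∣ k)]
  congr 1
  rw [Finset.prod_bij (fun (j : ℕ) (_ : j ∈ Icc 1 m) => p * j)]
  · intro a ha
    rw [mem_Icc] at ha
    rw [mem_filter, mem_Icc]
    exact ⟨⟨by nlinarith, by nlinarith⟩, Dvd.intro a rfl⟩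
  · intro a _ b _ hab
    exact Nat.eq_of_mul_eq_mul_left hp hab
  · intro b hb
    rw [mem_filter, mem_Icc] at hb
    obtain ⟨⟨h1, h2⟩, c, rfl⟩ := hb
    exact ⟨c, by rw [mem_Icc]; constructor <;> nlinarith, rfl⟩
  · intro a _; rfl


lemma prod_Icc_id (n : ℕ) : ∏ k ∈ Icc 1 n, k = n.factorial := by
  rw [← Finset.prod_range_add_one_eq_factorial]
  rw [Finset.prod_bij (fun (i : ℕ) (_ : i ∈ range n) => i + 1)]
  · intro a ha; simp at ha ⊢; omega
  · intro a ha b hb; omega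
  · intro b hb; simp at hb; exact ⟨b - 1, by simp; omega, by omega⟩
  · intro a ha; rfl

lemma key_id (p m : ℕ) (hp : 0 < p) :
    (2*(p*m)).choose (p*m) * ∏ k ∈ (Icc 1 (p*m)).filter (fun k => ¬ p ∣ k), k
      = (2*m).choose m * ∏ k ∈ (Icc 1 (p*m)).filter (fun k => ¬ p ∣ k), (p*m + k) := by
  set U := (Icc 1 (p*m)).filter (fun k => ¬ p ∣ k) with hU
  apply Nat.eq_of_mul_eq_mul_right (show 0 < p^m * m.factorial from
    Nat.mul_pos (Nat.pow_pos hp) (Nat.factorial_pos m))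
  -- LHS
  have hfact : (p*m).factorial = p^m * m.factorial * ∏ k ∈ U, k := by
    have h1 : (p*m).factorial = ∏ k ∈ Icc 1 (p*m), k := (prod_Icc_id (p*m)).symm
    rw [h1, split_prod p m hp (fun k => k)]
    have : ∏ j ∈ Icc 1 m, (p*j) = p^m * ∏ j ∈ Icc 1 m, j := by
      rw [Finset.prod_mul_distrib, Finset.prod_const, Nat.card_Icc]; simp
    rw [this, prod_Icc_id, mul_assoc]
  have hsplit2 : ∏ k ∈ Icc 1 (p*m), (p*m + k)
      = (p^m * ∏ j ∈ Icc 1 m, (m + j)) * ∏ k ∈ U, (p*m + k) := by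
    rw [split_prod p m hp (fun k => p*m + k)]
    congr 1
    have : ∀ j, p*m + p*j = p * (m + j) := fun j => by ring
    calc ∏ j ∈ Icc 1 m, (p*m + p*j) = ∏ j ∈ Icc 1 m, p * (m+j) := by
          exact Finset.prod_congr rfl (fun j _ => this j)
      _ = p^m * ∏ j ∈ Icc 1 m, (m + j) := by
          rw [Finset.prod_mul_distrib, Finset.prod_const, Nat.card_Icc]; simp
  calc (2*(p*m)).choose (p*m) * (∏ k ∈ U, k) * (p^m * m.factorial)
      = (2*(p*m)).choose (p*m) * (p*m).factorial := by rw [hfact]; ring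
    _ = ∏ k ∈ Icc 1 (p*m), (p*m + k) := choose_prod (p*m)
    _ = (p^m * ∏ j ∈ Icc 1 m, (m + j)) * ∏ k ∈ U, (p*m + k) := hsplit2
    _ = (p^m * ((2*m).choose m * m.factorial)) * ∏ k ∈ U, (p*m + k) := by rw [choose_prod m]
    _ = (2*m).choose m * (∏ k ∈ U, (p*m + k)) * (p^m * m.factorial) := by ring

open Filter

lemma step (p : ℕ) [hp : Fact p.Prime] (s : ℕ) :
    ((p : ℤ)^(s+1)) ∣ ((2 * p^(s+1)).choose (p^(s+1)) : ℤ) - ((2 * p^s).choose (p^s) : ℤ) := by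
  have hppos : 0 < p := hp.out.pos
  set m := p^s with hm
  have hn : p^(s+1) = p * m := by rw [pow_succ, mul_comm]
  set U := (Icc 1 (p*m)).filter (fun k => ¬ p ∣ k) with hUdef
  set u := ∏ k ∈ U, k with hu
  set v := ∏ k ∈ U, (p*m + k) with hv
  have hId : (2*(p*m)).choose (p*m) * u = (2*m).choose m * v := key_id p m hppos
  have hnotdvd : ¬ p ∣ u := by
    rw [hu]
    intro h
    obtain ⟨k, hk, hdk⟩ := (Prime.dvd_finset_prod_iff hp.out.prime _).mp h
    rw [hUdef, mem_filter] at hk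
    exact hk.2 hdk
  -- v ≡ u mod p*m
  have hmod : ((p*m : ℕ) : ℤ) ∣ (v : ℤ) - (u : ℤ) := by
    have hz : ((v : ZMod (p*m)) = (u : ZMod (p*m))) := by
      rw [hu, hv]
      push_cast
      apply Finset.prod_congr rfl
      intro k _
      have h0 : ((p*m : ℕ) : ZMod (p*m)) = 0 := ZMod.natCast_self _
      push_cast at h0
      rw [h0, zero_add]
    have := (ZMod.natCast_eq_natCast_iff v u (p*m)).mp hz
    exact Nat.ModEq.dvd this.symm
  have hcop : IsCoprime ((p:ℤ)^(s+1)) (u : ℤ) := by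
    rw [← Nat.cast_pow]
    exact Nat.Coprime.isCoprime
      (Nat.Coprime.pow_left _ ((Nat.Prime.coprime_iff_not_dvd hp.out).mpr hnotdvd))
  have hIdZ : ((2*(p*m)).choose (p*m) : ℤ) * u = ((2*m).choose m : ℤ) * v := by
    exact_mod_cast congrArg (Nat.cast : ℕ → ℤ) hId
  have hkey : (u : ℤ) * (((2*(p*m)).choose (p*m) : ℤ) - ((2*m).choose m : ℤ))
      = ((2*m).choose m : ℤ) * ((v : ℤ) - u) := by linear_combination hIdZ
  have hdvd2 : ((p:ℤ)^(s+1)) ∣ (u : ℤ) * (((2*(p*m)).choose (p*m) : ℤ) - ((2*m).choose m : ℤ)) := by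
    rw [hkey]
    refine Dvd.dvd.mul_left ?_ _
    have h5 : ((p:ℤ)^(s+1)) = ((p*m : ℕ) : ℤ) := by rw [← hn]; push_cast; ring
    rw [h5]; exact hmod
  have := hcop.dvd_of_dvd_mul_left hdvd2
  rw [hn]
  exact this

/-- For any prime `p`, the sequence `C(2p^s, p^s)` converges in `ℤ_p` as `s → ∞`
(in particular, for `p = 3` the sequence `C(2·3^s, 3^s)` converges in `ℤ₃`). -/
theorem stmt_9 (p : ℕ) [Fact p.Prime] :
    ∃ L : ℤ_[p],
      Tendsto (fun s : ℕ => (Nat.choose (2 * p ^ s) (p ^ s) : ℤ_[p])) atTop (nhds L) := by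
  set f : ℕ → ℤ_[p] := fun s => (Nat.choose (2 * p ^ s) (p ^ s) : ℤ_[p]) with hf
  have hp := (Fact.out : p.Prime)
  have hp1 : (1 : ℝ) < p := by exact_mod_cast hp.one_lt
  have hcau : CauchySeq f := by
    apply cauchySeq_of_le_geometric ((p:ℝ)⁻¹) ((p:ℝ)⁻¹) (inv_lt_one_of_one_lt₀ hp1)
    intro n
    have hd := step p n
    set d : ℤ := ((2 * p^(n+1)).choose (p^(n+1)) : ℤ) - ((2 * p^n).choose (p^n) : ℤ) with hdd
    have h1 : f (n+1) - f n = ((d : ℤ) : ℤ_[p]) := by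
      simp only [hf, hdd]; push_cast; ring
    rw [dist_comm, dist_eq_norm, h1]
    have h2 : ‖((d : ℤ) : ℤ_[p])‖ ≤ (p : ℝ) ^ (-(n+1 : ℕ) : ℤ) :=
      PadicInt.norm_int_le_pow_iff_dvd.mpr hd
    refine h2.trans (le_of_eq ?_)
    rw [zpow_neg, zpow_natCast, pow_succ, mul_inv, ← inv_pow]
    ring
  exact cauchySeq_tendsto_of_complete hcau
end

section
/- For real w with 0 < w and w near 1 (say 1/2 < w < 2, w ≠ 1), ∑_{k≥1} (-(w - w^{-1})²)^{k-1} / (k · C(2k,k)) = log(w²) / (w² - w^{-2}). -/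
open intervalIntegral in
lemma beta_nat (n : ℕ) : ∀ m : ℕ, ∫ x in (0:ℝ)..1, x ^ m * (1 - x) ^ n
    = (Nat.factorial m * Nat.factorial n : ℝ) / (Nat.factorial (m + n + 1)) := by
  induction n with
  | zero =>
    intro m
    simp [integral_pow, Nat.factorial_succ]
    field_simp
  | succ n ih =>
    intro m
    have key := integral_mul_deriv_eq_deriv_mul
      (u := fun x : ℝ => (1 - x) ^ (n + 1)) (u' := fun x : ℝ => -((n : ℝ) + 1) * (1 - x) ^ n)
      (v := fun x : ℝ => x ^ (m + 1) / ((m : ℝ) + 1)) (v' := fun x : ℝ => x ^ m)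
      (a := 0) (b := 1)
      (fun x _ => by
        have h : HasDerivAt (fun x : ℝ => (1 - x) ^ (n + 1))
            (((n : ℝ) + 1) * (1 - x) ^ n * (-1)) x := by
          have := ((hasDerivAt_id x).const_sub 1).fun_pow (n + 1)
          simpa using this
        refine h.congr_deriv ?_; ring)
      (fun x _ => by
        have h := (hasDerivAt_pow (m + 1) x).div_const ((m : ℝ) + 1)
        have hm : ((m : ℝ) + 1) ≠ 0 := by positivity
        convert h using 1
        push_cast
        field_simp)
      (Continuous.intervalIntegrable (by continuity) _ _)
      (Continuous.intervalIntegrable (by continuity) _ _)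
    have e1 : ∫ x in (0:ℝ)..1, x ^ m * (1 - x) ^ (n + 1)
        = ∫ x in (0:ℝ)..1, (1 - x) ^ (n + 1) * x ^ m := by
      congr 1; ext x; ring
    have e2 : (∫ x in (0:ℝ)..1, -((n : ℝ) + 1) * (1 - x) ^ n * (x ^ (m + 1) / ((m : ℝ) + 1)))
        = (-((n : ℝ) + 1) / ((m : ℝ) + 1)) * ∫ x in (0:ℝ)..1, x ^ (m + 1) * (1 - x) ^ n := by
      rw [← integral_const_mul]
      congr 1; ext x; ring
    rw [e1, key, e2, ih (m + 1)]
    have hm : ((m : ℝ) + 1) ≠ 0 := by positivity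
    have hf : (Nat.factorial (m + (n + 1) + 1) : ℝ) ≠ 0 := by positivity
    simp only [Nat.factorial_succ]
    push_cast
    have hE : m + 1 + n = m + (n + 1) := by omega
    rw [hE]
    field_simp
    ring

/-- Each coefficient as a beta integral. -/
lemma term_eq_integral (k : ℕ) :
    (1 : ℝ) / ((k + 1 : ℝ) * (Nat.choose (2 * (k + 1)) (k + 1) : ℝ))
      = ∫ x in (0:ℝ)..1, x ^ k * (1 - x) ^ (k + 1) := by
  rw [beta_nat (k + 1) k]
  have h1 : (k + 1 : ℕ) ≤ 2 * (k + 1) := by omega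
  rw [Nat.cast_choose ℝ h1]
  have h2 : 2 * (k + 1) - (k + 1) = k + 1 := by omega
  rw [h2]
  have h3 : k + (k + 1) + 1 = 2 * (k + 1) := by omega
  rw [h3]
  have hk : ((k:ℝ) + 1) ≠ 0 := by positivity
  have hf1 : (Nat.factorial k : ℝ) ≠ 0 := by positivity
  have hf2 : (Nat.factorial (k + 1) : ℝ) ≠ 0 := by positivity
  have hf3 : (Nat.factorial (2 * (k + 1)) : ℝ) ≠ 0 := by positivity
  have hfs : (Nat.factorial (k + 1) : ℝ) = ((k : ℝ) + 1) * Nat.factorial k := by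
    rw [Nat.factorial_succ]; push_cast; ring
  field_simp
  rw [hfs]

set_option maxHeartbeats 2000000 in
/-- For real `w` with `1/2 < w < 2` and `w ≠ 1`,
`∑_{k≥1} (-(w - w⁻¹)²)^{k-1}/(k · C(2k,k)) = log(w²)/(w² - w⁻²)`. -/
theorem stmt_13 (w : ℝ) (hw₁ : 1 / 2 < w) (hw₂ : w < 2) (hw : w ≠ 1) :
    ∑' k : ℕ, (-(w - w⁻¹) ^ 2) ^ k /
        ((k + 1 : ℝ) * (Nat.choose (2 * (k + 1)) (k + 1) : ℝ)) =
      Real.log (w ^ 2) / (w ^ 2 - w⁻¹ ^ 2) := by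
  have hw0 : (0:ℝ) < w := lt_trans (by norm_num) hw₁
  have hwne : w ≠ 0 := ne_of_gt hw0
  have hww : w * w⁻¹ = 1 := mul_inv_cancel₀ hwne
  obtain ⟨d, hd⟩ : ∃ d : ℝ, w - w⁻¹ = d := ⟨_, rfl⟩
  rw [hd]
  have hdne : d ≠ 0 := by
    intro h
    apply hw
    have h1 : w = w⁻¹ := by rw [← hd] at h; linarith
    nlinarith [hww]
  have hinv1 : w⁻¹ < 2 := by nlinarith [hww]
  have hinv2 : (1:ℝ)/2 < w⁻¹ := by nlinarith [hww]
  have hd2 : d ^ 2 < 4 := by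
    have h1 : d < 3/2 := by rw [← hd]; nlinarith
    have h2 : -(3/2) < d := by rw [← hd]; nlinarith
    nlinarith [mul_pos (by linarith : (0:ℝ) < 3/2 - d) (by linarith : (0:ℝ) < d + 3/2)]
  -- Step 1: rewrite terms as integrals
  have step1 : ∀ k : ℕ, (-d ^ 2) ^ k / ((k + 1 : ℝ) * (Nat.choose (2 * (k + 1)) (k + 1) : ℝ))
      = ∫ x in Set.Ioc (0:ℝ) 1, (-d ^ 2) ^ k * (x ^ k * (1 - x) ^ (k + 1)) := by
    intro k
    rw [← intervalIntegral.integral_of_le (by norm_num : (0:ℝ) ≤ 1),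
      intervalIntegral.integral_const_mul, ← term_eq_integral k]
    ring
  -- Step 2: swap sum and integral
  have hr : d ^ 2 / 4 < 1 := by nlinarith [hd2]
  have hr0 : (0:ℝ) ≤ d ^ 2 / 4 := by positivity
  have step2 : ∑' k : ℕ, (∫ x in Set.Ioc (0:ℝ) 1, (-d ^ 2) ^ k * (x ^ k * (1 - x) ^ (k + 1)))
      = ∫ x in Set.Ioc (0:ℝ) 1, ∑' k : ℕ, (-d ^ 2) ^ k * (x ^ k * (1 - x) ^ (k + 1)) := by
    apply MeasureTheory.integral_tsum_of_summable_integral_norm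
    · intro k
      apply Continuous.integrableOn_Ioc
      continuity
    · apply Summable.of_nonneg_of_le
        (fun k => MeasureTheory.integral_nonneg (fun x => norm_nonneg _))
        (fun k => ?_) (summable_geometric_of_lt_one hr0 hr)
      calc (∫ x in Set.Ioc (0:ℝ) 1, ‖(-d ^ 2) ^ k * (x ^ k * (1 - x) ^ (k + 1))‖)
          ≤ ∫ _x in Set.Ioc (0:ℝ) 1, (d ^ 2 / 4) ^ k := by
            apply MeasureTheory.setIntegral_mono_on
            · apply Continuous.integrableOn_Ioc
              continuity
            · exact (MeasureTheory.integrableOn_const_iff).mpr (Or.inr (by simp))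
            · exact measurableSet_Ioc
            · intro x hx
              obtain ⟨hx0, hx1⟩ := hx
              have hx0' : 0 < x := hx0
              have h14 : x * (1 - x) ≤ 1/4 := by nlinarith [sq_nonneg (x - 1/2)]
              have h1x : 0 ≤ 1 - x := by linarith
              rw [norm_mul, norm_mul, norm_pow, norm_pow, norm_pow]
              rw [Real.norm_of_nonneg hx0'.le, Real.norm_of_nonneg h1x]
              have hnt : ‖(-d ^ 2 : ℝ)‖ = d ^ 2 := by
                rw [norm_neg, Real.norm_of_nonneg (by positivity)]
              rw [hnt]
              calc (d ^ 2) ^ k * (x ^ k * (1 - x) ^ (k + 1))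
                  = (d ^ 2 * (x * (1 - x))) ^ k * (1 - x) := by
                    rw [mul_pow, mul_pow]; ring
                _ ≤ (d ^ 2 * (1/4)) ^ k * 1 := by
                    apply mul_le_mul
                    · apply pow_le_pow_left₀ (by positivity)
                      exact mul_le_mul_of_nonneg_left h14 (by positivity)
                    · linarith
                    · linarith
                    · positivity
                _ = (d ^ 2 / 4) ^ k := by ring
        _ = (d ^ 2 / 4) ^ k := by simp
  -- Step 3: sum the geometric series pointwise
  have step3 : ∀ x ∈ Set.Ioc (0:ℝ) 1,
      (∑' k : ℕ, (-d ^ 2) ^ k * (x ^ k * (1 - x) ^ (k + 1)))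
        = (1 - x) / (1 + d ^ 2 * (x * (1 - x))) := by
    intro x hx
    obtain ⟨hx0, hx1⟩ := hx
    have h14 : x * (1 - x) ≤ 1/4 := by nlinarith [sq_nonneg (x - 1/2)]
    have hxx : 0 ≤ x * (1 - x) := by nlinarith
    have hnorm : ‖-d ^ 2 * (x * (1 - x))‖ < 1 := by
      rw [norm_mul, norm_neg, Real.norm_of_nonneg (by positivity),
        Real.norm_of_nonneg hxx]
      calc d ^ 2 * (x * (1 - x)) ≤ d ^ 2 * (1/4) :=
            mul_le_mul_of_nonneg_left h14 (by positivity)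
        _ < 1 := by nlinarith
    have hcong : ∀ k : ℕ, (-d ^ 2) ^ k * (x ^ k * (1 - x) ^ (k + 1))
        = (1 - x) * (-d ^ 2 * (x * (1 - x))) ^ k := by
      intro k
      rw [mul_pow, mul_pow]
      ring
    rw [tsum_congr hcong, tsum_mul_left, tsum_geometric_of_norm_lt_one hnorm]
    rw [div_eq_mul_inv]
    congr 1
    ring
  rw [tsum_congr step1, step2,
    MeasureTheory.setIntegral_congr_fun measurableSet_Ioc step3,
    ← intervalIntegral.integral_of_le (by norm_num : (0:ℝ) ≤ 1), ← hd]
  -- Step 4: compute the integral by an explicit antiderivative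
  have hdw : (w - w⁻¹) * w = w ^ 2 - 1 := by field_simp
  have hdow : (w - w⁻¹) / w = 1 - w⁻¹ ^ 2 := by field_simp
  have hw2 : (0:ℝ) < w ^ 2 := by positivity
  have hiw2 : (0:ℝ) < w⁻¹ ^ 2 := by positivity
  have hpos1 : ∀ x ∈ Set.Icc (0:ℝ) 1, 0 < 1 + (w - w⁻¹) * w * x := by
    intro x hx
    obtain ⟨h0, h1⟩ := hx
    rw [hdw]
    rcases h0.lt_or_eq with hx0 | hx0
    · nlinarith [mul_pos hx0 hw2]
    · rw [← hx0]; norm_num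
  have hpos2 : ∀ x ∈ Set.Icc (0:ℝ) 1, 0 < 1 - (w - w⁻¹) / w * x := by
    intro x hx
    obtain ⟨h0, h1⟩ := hx
    rw [hdow]
    rcases h0.lt_or_eq with hx0 | hx0
    · nlinarith [mul_pos hx0 hiw2]
    · rw [← hx0]; norm_num
  set A : ℝ := w ^ 2 / ((w - w⁻¹) ^ 2 * (w ^ 2 + 1)) with hA
  set B : ℝ := 1 / ((w - w⁻¹) ^ 2 * (w ^ 2 + 1)) with hB
  have hdenom : ∀ x ∈ Set.Icc (0:ℝ) 1, (1 + (w - w⁻¹) ^ 2 * (x * (1 - x))) ≠ 0 := by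
    intro x hx
    obtain ⟨h0, h1⟩ := hx
    have : 0 ≤ (w - w⁻¹) ^ 2 * (x * (1 - x)) := by
      apply mul_nonneg (by positivity); nlinarith
    positivity
  have hfact : ∀ x : ℝ, (1 + (w - w⁻¹) * w * x) * (1 - (w - w⁻¹) / w * x)
      = 1 + (w - w⁻¹) ^ 2 * (x * (1 - x)) := by
    intro x
    field_simp
    ring
  have hderiv : ∀ x ∈ Set.uIcc (0:ℝ) 1,
      HasDerivAt (fun s => A * Real.log (1 + (w - w⁻¹) * w * s)
          + B * Real.log (1 - (w - w⁻¹) / w * s))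
        ((1 - x) / (1 + (w - w⁻¹) ^ 2 * (x * (1 - x)))) x := by
    intro x hx
    rw [Set.uIcc_of_le (by norm_num : (0:ℝ) ≤ 1)] at hx
    have h1 : HasDerivAt (fun s : ℝ => 1 + (w - w⁻¹) * w * s) ((w - w⁻¹) * w) x := by
      simpa using ((hasDerivAt_id x).const_mul ((w - w⁻¹) * w)).const_add 1
    have h2 : HasDerivAt (fun s : ℝ => 1 - (w - w⁻¹) / w * s) (-((w - w⁻¹) / w)) x := by
      simpa using ((hasDerivAt_id x).const_mul ((w - w⁻¹) / w)).const_sub 1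
    have hne1 : 1 + (w - w⁻¹) * w * x ≠ 0 := ne_of_gt (hpos1 x hx)
    have hne2 : 1 - (w - w⁻¹) / w * x ≠ 0 := ne_of_gt (hpos2 x hx)
    have H := ((h1.log hne1).const_mul A).add ((h2.log hne2).const_mul B)
    refine H.congr_deriv ?_
    symm
    have hd0 : w - w⁻¹ ≠ 0 := by rw [hd]; exact hdne
    have hw21 : (w:ℝ) ^ 2 + 1 ≠ 0 := by positivity
    have key : ∀ u v : ℝ, u ≠ 0 → v ≠ 0 →
        A * ((w - w⁻¹) * w / u) + B * (-((w - w⁻¹) / w) / v)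
          = (A * ((w - w⁻¹) * w) * v + B * (-((w - w⁻¹) / w)) * u) / (u * v) := by
      intro u v hu hv
      field_simp
    have hw1ne : (w:ℝ) ^ 2 - 1 ≠ 0 := by rw [← hdw]; exact mul_ne_zero hd0 hwne
    have hsq : (w - w⁻¹) ^ 2 = (w ^ 2 - 1) ^ 2 / w ^ 2 := by
      rw [eq_div_iff (by positivity : (w:ℝ) ^ 2 ≠ 0), ← mul_pow, hdw]
    have hdow2 : (w - w⁻¹) / w = (w ^ 2 - 1) / w ^ 2 := by
      rw [div_eq_div_iff hwne (by positivity : (w:ℝ) ^ 2 ≠ 0)]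
      linear_combination w * hdw
    rw [key _ _ hne1 hne2, ← hfact x]
    congr 1
    rw [hA, hB, hsq, hdw, hdow2]
    field_simp
    ring
  have hint : IntervalIntegrable
      (fun x => (1 - x) / (1 + (w - w⁻¹) ^ 2 * (x * (1 - x))))
      MeasureTheory.volume 0 1 := by
    apply ContinuousOn.intervalIntegrable
    rw [Set.uIcc_of_le (by norm_num : (0:ℝ) ≤ 1)]
    exact ContinuousOn.div (by fun_prop) (by fun_prop) (fun x hx => hdenom x hx)
  rw [intervalIntegral.integral_eq_sub_of_hasDerivAt hderiv hint]
  have e1 : 1 + (w - w⁻¹) * w * 1 = w ^ 2 := by rw [mul_one, hdw]; ring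
  have e2 : 1 - (w - w⁻¹) / w * 1 = w⁻¹ ^ 2 := by rw [mul_one, hdow]; ring
  rw [e1, e2]
  simp only [mul_zero, add_zero, sub_zero, Real.log_one, zero_add]
  rw [inv_pow, Real.log_inv]
  have hd0 : w - w⁻¹ ≠ 0 := by rw [hd]; exact hdne
  have hw21 : (w:ℝ) ^ 2 + 1 ≠ 0 := by positivity
  have hsum : (0:ℝ) < w + w⁻¹ := by positivity
  have hne3 : w ^ 2 - (w ^ 2)⁻¹ ≠ 0 := by
    have hfac : w ^ 2 - (w ^ 2)⁻¹ = (w - w⁻¹) * (w + w⁻¹) := by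
      rw [← inv_pow]; field_simp; ring
    rw [hfac]
    exact mul_ne_zero hd0 (ne_of_gt hsum)
  have hw1ne : (w:ℝ) ^ 2 - 1 ≠ 0 := by rw [← hdw]; exact mul_ne_zero hd0 hwne
  have hsq : (w - w⁻¹) ^ 2 = (w ^ 2 - 1) ^ 2 / w ^ 2 := by
    rw [eq_div_iff (by positivity : (w:ℝ) ^ 2 ≠ 0), ← mul_pow, hdw]
  have hfr : (w ^ 2 - (w ^ 2)⁻¹ : ℝ) = (w ^ 2 - 1) * (w ^ 2 + 1) / w ^ 2 := by
    rw [eq_div_iff (by positivity : (w:ℝ) ^ 2 ≠ 0)]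
    field_simp
    ring
  rw [hA, hB, hsq, hfr]
  field_simp
  ring
end

section
/- For |x| ≤ 1, ∑_{k≥1} (2x)^{2k} / (k² C(2k,k)) = 2 (arcsin x)². Equivalently, ∑_{k≥1} t^k/(k² C(2k,k)) = 2 arcsin(√t / 2)² for 0 ≤ t ≤ 4. -/
open Real Set Filter Topology

noncomputable def cb (k : ℕ) : ℝ := (Nat.choose (2 * (k + 1)) (k + 1) : ℝ)

lemma cb_pos (k : ℕ) : 0 < cb k := by
  have := Nat.choose_pos (show k + 1 ≤ 2 * (k + 1) by omega)
  unfold cb; exact_mod_cast this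

lemma cb_eq_central (k : ℕ) : cb k = (Nat.centralBinom (k + 1) : ℝ) := rfl

lemma cb_zero : cb 0 = 2 := by norm_num [cb]

lemma cb_succ (k : ℕ) : ((k : ℝ) + 2) * cb (k + 1) = 2 * (2 * k + 3) * cb k := by
  have h := Nat.succ_mul_centralBinom_succ (k + 1)
  have h' : ((k + 2) * Nat.centralBinom (k + 2) : ℝ)
      = ((2 * (2 * (k + 1) + 1) * Nat.centralBinom (k + 1) : ℕ) : ℝ) := by
    exact_mod_cast congrArg (fun n : ℕ => (n : ℝ)) h
  rw [cb_eq_central, cb_eq_central]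
  push_cast at h' ⊢
  linarith [h']

lemma sqrt_bound (k : ℕ) : (4 : ℝ) ^ (k + 1) ≤ 2 * Real.sqrt (k + 1) * cb k := by
  induction k with
  | zero => simp [cb_zero]; norm_num
  | succ k ih =>
    set a := Real.sqrt ((k:ℝ) + 1) with ha_def
    set b := Real.sqrt ((k:ℝ) + 1 + 1) with hb_def
    have ha : a ^ 2 = (k : ℝ) + 1 := by rw [ha_def, Real.sq_sqrt]; positivity
    have hb : b ^ 2 = (k : ℝ) + 2 := by
      rw [hb_def, Real.sq_sqrt] <;> [ring; positivity]
    have ha0 : 0 ≤ a := Real.sqrt_nonneg _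
    have hb0 : 0 ≤ b := Real.sqrt_nonneg _
    have hcb := cb_pos k
    have hcb' := cb_pos (k + 1)
    have hrec := cb_succ k
    have key : ((k:ℝ) + 2) * (4 : ℝ) ^ (k + 2) ≤ ((k:ℝ) + 2) * (2 * b * cb (k + 1)) := by
      calc ((k:ℝ) + 2) * (4 : ℝ) ^ (k + 2) = b ^ 2 * (4 * (4:ℝ)^(k+1)) := by rw [hb]; ring
        _ ≤ b ^ 2 * (4 * (2 * a * cb k)) := by
            have := sq_nonneg b
            nlinarith [ih, sq_nonneg b]
        _ = 8 * a * b ^ 2 * cb k := by ring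
        _ ≤ 4 * b * (a ^ 2 + b ^ 2) * cb k := by
            nlinarith [mul_nonneg (mul_nonneg hb0 hcb.le) (sq_nonneg (a - b))]
        _ = 2 * b * (2 * (2 * (k:ℝ) + 3) * cb k) := by rw [ha, hb]; ring
        _ = ((k:ℝ) + 2) * (2 * b * cb (k + 1)) := by rw [← hrec]; ring
    have hk2 : (0:ℝ) < (k:ℝ) + 2 := by positivity
    have := le_of_mul_le_mul_left key hk2
    push_cast
    convert this using 3

noncomputable def c (k : ℕ) : ℝ := 2 ^ (2 * k + 1) / (((k : ℝ) + 1) * cb k)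

lemma c_pos (k : ℕ) : 0 < c k := by
  have := cb_pos k
  unfold c; positivity

lemma c_le_one (k : ℕ) : c k ≤ 1 := by
  have hcb := cb_pos k
  have hs := sqrt_bound k
  have hsq : Real.sqrt ((k:ℝ) + 1) ≤ (k:ℝ) + 1 := by
    nlinarith [Real.sq_sqrt (show (0:ℝ) ≤ (k:ℝ)+1 by positivity), Real.sqrt_nonneg ((k:ℝ)+1)]
  rw [c, div_le_one (by positivity)]
  have h2 : (4:ℝ) ^ (k+1) = 2 * 2 ^ (2*k+1) := by
    rw [show (4:ℝ) = 2^2 by norm_num, ← pow_mul]; ring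
  have h3 : (4:ℝ)^(k+1) ≤ 2 * ((k:ℝ)+1) * cb k := by
    calc (4:ℝ)^(k+1) ≤ 2 * Real.sqrt ((k:ℝ)+1) * cb k := by
          convert hs using 3
      _ ≤ 2 * ((k:ℝ)+1) * cb k := by nlinarith
  linarith

lemma crec (k : ℕ) : (2 * (k:ℝ) + 3) * c (k + 1) = (2 * k + 2) * c k := by
  have hcb := cb_pos k
  have hcb' := cb_pos (k + 1)
  have hrec := cb_succ k
  have hd : ((k:ℝ) + 1 + 1) * cb (k + 1) = 2 * (2 * (k:ℝ) + 3) * cb k := by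
    push_cast at hrec ⊢; linarith
  unfold c
  push_cast
  rw [show 2 * (k + 1) + 1 = 2 * k + 3 by ring, hd]
  field_simp
  ring

lemma c_zero : c 0 = 1 := by norm_num [c, cb_zero]

lemma summable_geom_lin {r : ℝ} (hr : |r| < 1) :
    Summable (fun k : ℕ => (2 * (k:ℝ) + 3) * |r| ^ (2 * k)) := by
  have hq : ‖|r| ^ 2‖ < 1 := by
    rw [Real.norm_eq_abs, abs_pow, abs_abs]
    nlinarith [abs_nonneg r]
  have h1 : Summable (fun k : ℕ => 2 * ((k:ℝ) * (|r|^2) ^ k) + 3 * (|r|^2) ^ k) :=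
    ((summable_pow_mul_geometric_of_norm_lt_one 1 hq).congr
      (by intro k; push_cast; ring) |>.mul_left 2).add
      ((summable_geometric_of_norm_lt_one hq).mul_left 3)
  refine h1.congr fun k => ?_
  rw [pow_mul]; ring

-- generic comparison: any sequence with |f k| ≤ (2k+3)*|r|^(2k) is summable
lemma summable_of_bound {r : ℝ} (hr : |r| < 1) {f : ℕ → ℝ}
    (hf : ∀ k, |f k| ≤ (2 * (k:ℝ) + 3) * |r| ^ (2 * k)) : Summable f :=
  Summable.of_norm_bounded (summable_geom_lin hr) (by simpa using hf)

lemma abs_c_pow_le {x : ℝ} (hx : |x| ≤ 1) (k m : ℕ) (hm : 2 * k ≤ m) :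
    |c k * x ^ m| ≤ |x| ^ (2 * k) := by
  rw [abs_mul, abs_pow, abs_of_pos (c_pos k)]
  calc c k * |x| ^ m ≤ 1 * |x| ^ (2 * k) := by
        apply mul_le_mul (c_le_one k) (pow_le_pow_of_le_one (abs_nonneg x) hx hm)
          (by positivity) one_pos.le
    _ = |x| ^ (2 * k) := one_mul _

lemma summable_T {x : ℝ} (hx : |x| < 1) : Summable (fun k => c k * x ^ (2 * k + 1)) := by
  refine summable_of_bound hx fun k => ?_
  calc |c k * x ^ (2*k+1)| ≤ |x| ^ (2*k) := abs_c_pow_le hx.le k _ (by omega)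
    _ ≤ (2*(k:ℝ)+3) * |x| ^ (2*k) := by nlinarith [pow_nonneg (abs_nonneg x) (2*k), Nat.cast_nonneg (α := ℝ) k]

lemma summable_T' {x : ℝ} (hx : |x| < 1) :
    Summable (fun k : ℕ => (2 * (k:ℝ) + 1) * c k * x ^ (2 * k)) := by
  refine summable_of_bound hx fun k => ?_
  rw [abs_mul]
  calc |(2*(k:ℝ)+1) * c k| * |x ^ (2*k)|
      ≤ (2*(k:ℝ)+3) * |x| ^ (2*k) := by
        rw [abs_pow]
        apply mul_le_mul _ le_rfl (by positivity) (by positivity)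
        rw [abs_mul]
        have h1 : |2*(k:ℝ)+1| = 2*(k:ℝ)+1 := abs_of_pos (by positivity)
        have h2 : |c k| ≤ 1 := by rw [abs_of_pos (c_pos k)]; exact c_le_one k
        calc |2*(k:ℝ)+1| * |c k| ≤ (2*(k:ℝ)+1) * 1 := by
              rw [h1]; exact mul_le_mul_of_nonneg_left h2 (by positivity)
          _ ≤ 2*(k:ℝ)+3 := by nlinarith [Nat.cast_nonneg (α := ℝ) k]

lemma summable_T'' {x : ℝ} (hx : |x| < 1) (a b : ℝ) (hb : 0 ≤ b) (hab : ∀ k:ℕ, |a * (k:ℝ) + b| ≤ 2*(k:ℝ)+3) :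
    Summable (fun k : ℕ => (a * (k:ℝ) + b) * c k * x ^ (2 * k + 2)) := by
  refine summable_of_bound hx fun k => ?_
  rw [abs_mul, abs_mul]
  have h2 : |c k| ≤ 1 := by rw [abs_of_pos (c_pos k)]; exact c_le_one k
  have h3 : |x ^ (2*k+2)| ≤ |x|^(2*k) := by
    rw [abs_pow]
    exact pow_le_pow_of_le_one (abs_nonneg x) hx.le (by omega)
  calc |a*(k:ℝ)+b| * |c k| * |x^(2*k+2)| ≤ (2*(k:ℝ)+3) * 1 * |x|^(2*k) := by
        apply mul_le_mul _ h3 (abs_nonneg _) (by positivity)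
        exact mul_le_mul (hab k) h2 (abs_nonneg _) (by positivity)
    _ = (2*(k:ℝ)+3) * |x|^(2*k) := by ring

noncomputable def Tf (x : ℝ) : ℝ := ∑' k, c k * x ^ (2 * k + 1)

lemma Tf_zero : Tf 0 = 0 := by
  unfold Tf
  convert tsum_zero with k
  simp

lemma hasDerivAt_Tf {x : ℝ} (hx : |x| < 1) :
    HasDerivAt Tf (∑' k : ℕ, (2 * (k:ℝ) + 1) * c k * x ^ (2 * k)) x := by
  set r : ℝ := (|x| + 1) / 2 with hr_def
  have hr0 : 0 < r := by positivity
  have hxr : |x| < r := by rw [hr_def]; linarith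
  have hr1 : r < 1 := by rw [hr_def]; linarith
  have hrabs : |r| = r := abs_of_pos hr0
  apply hasDerivAt_tsum_of_isPreconnected
    (u := fun k : ℕ => (2 * (k:ℝ) + 3) * r ^ (2 * k))
    (t := Set.Ioo (-r) r) (y₀ := 0)
    (g' := fun (k : ℕ) (y : ℝ) => (2 * (k:ℝ) + 1) * c k * y ^ (2 * k))
  · have := summable_geom_lin (r := r) (by rwa [hrabs])
    rwa [hrabs] at this
  · exact isOpen_Ioo
  · exact (convex_Ioo _ _).isPreconnected
  · intro k y _
    have h := (hasDerivAt_pow (2*k+1) y).const_mul (c k)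
    refine h.congr_deriv ?_
    rw [Nat.add_sub_cancel]
    push_cast
    ring
  · intro k y hy
    have hyr : |y| < r := abs_lt.mpr ⟨hy.1, hy.2⟩
    rw [Real.norm_eq_abs, abs_mul, abs_mul]
    have h1 : |2*(k:ℝ)+1| ≤ 2*(k:ℝ)+3 := by
      rw [abs_of_pos (by positivity)]; linarith
    have h2 : |c k| ≤ 1 := by rw [abs_of_pos (c_pos k)]; exact c_le_one k
    have h3 : |y^(2*k)| ≤ r^(2*k) := by
      rw [abs_pow]; exact pow_le_pow_left₀ (abs_nonneg y) hyr.le _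
    calc |2*(k:ℝ)+1| * |c k| * |y^(2*k)| ≤ (2*(k:ℝ)+3) * 1 * r^(2*k) := by
          apply mul_le_mul _ h3 (abs_nonneg _) (by positivity)
          exact mul_le_mul h1 h2 (abs_nonneg _) (by positivity)
      _ = (2*(k:ℝ)+3) * r^(2*k) := by ring
  · exact ⟨by linarith, by linarith⟩
  · apply Summable.congr summable_zero
    intro k; simp
  · exact ⟨by linarith [neg_abs_le x, abs_lt.mp hxr], (abs_lt.mp hxr).2⟩

lemma ode {x : ℝ} (hx : |x| < 1) :
    (1 - x^2) * (∑' k : ℕ, (2*(k:ℝ)+1) * c k * x^(2*k)) = 1 + x * Tf x := by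
  have h1 := summable_T' hx
  have hS2 : Summable (fun k : ℕ => (2*(k:ℝ)+2) * c k * x^(2*k+2)) := by
    have := summable_T'' hx 2 2 (by norm_num)
      (fun k => by rw [abs_of_pos (by positivity)]; linarith)
    exact this
  have hS3 : Summable (fun k : ℕ => (2*(k:ℝ)+1) * c k * x^(2*k+2)) := by
    have := summable_T'' hx 2 1 (by norm_num)
      (fun k => by rw [abs_of_pos (by positivity)]; linarith)
    exact this
  have hSc : Summable (fun k : ℕ => c k * x^(2*k+2)) := by
    have := summable_T'' hx 0 1 (by norm_num)
      (fun k => by rw [zero_mul, zero_add, abs_one]; linarith [Nat.cast_nonneg (α := ℝ) k])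
    refine this.congr fun k => ?_
    ring
  have e0 : (∑' k : ℕ, (2*(k:ℝ)+1) * c k * x^(2*k))
      = 1 + ∑' k : ℕ, (2*(k:ℝ)+2) * c k * x^(2*k+2) := by
    rw [h1.tsum_eq_zero_add]
    congr 1
    · simp [c_zero]
    · apply tsum_congr; intro k
      have hc := crec k
      push_cast
      rw [show 2*(k+1) = 2*k+2 from by ring]
      linear_combination (x^(2*k+2)) * hc
  have e1 : x^2 * (∑' k : ℕ, (2*(k:ℝ)+1) * c k * x^(2*k))
      = ∑' k : ℕ, (2*(k:ℝ)+1) * c k * x^(2*k+2) := by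
    rw [← tsum_mul_left]
    apply tsum_congr; intro k; ring
  have e2 : (∑' k : ℕ, (2*(k:ℝ)+2) * c k * x^(2*k+2))
      - (∑' k : ℕ, (2*(k:ℝ)+1) * c k * x^(2*k+2))
      = ∑' k : ℕ, c k * x^(2*k+2) := by
    rw [← hS2.tsum_sub hS3]
    apply tsum_congr; intro k; ring
  have e3 : (∑' k : ℕ, c k * x^(2*k+2)) = x * Tf x := by
    unfold Tf
    rw [← tsum_mul_left]
    apply tsum_congr; intro k; ring
  calc (1 - x^2) * (∑' k : ℕ, (2*(k:ℝ)+1) * c k * x^(2*k))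
      = (∑' k : ℕ, (2*(k:ℝ)+1) * c k * x^(2*k))
        - x^2 * (∑' k : ℕ, (2*(k:ℝ)+1) * c k * x^(2*k)) := by ring
    _ = (1 + ∑' k : ℕ, (2*(k:ℝ)+2) * c k * x^(2*k+2))
        - ∑' k : ℕ, (2*(k:ℝ)+1) * c k * x^(2*k+2) := by rw [e1, e0]
    _ = 1 + ((∑' k : ℕ, (2*(k:ℝ)+2) * c k * x^(2*k+2))
        - ∑' k : ℕ, (2*(k:ℝ)+1) * c k * x^(2*k+2)) := by ring
    _ = 1 + x * Tf x := by rw [e2, e3]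

lemma hasDerivAt_F {y : ℝ} (hy : |y| < 1) :
    HasDerivAt (fun z => Real.sqrt (1 - z^2) * Tf z - Real.arcsin z) 0 y := by
  have hy' := abs_lt.mp hy
  have hy2 : 0 < 1 - y^2 := by nlinarith [sq_abs y, abs_nonneg y]
  set s := Real.sqrt (1 - y^2) with hs_def
  have hs : 0 < s := Real.sqrt_pos.mpr hy2
  have hs2 : s^2 = 1 - y^2 := Real.sq_sqrt hy2.le
  have d1 : HasDerivAt (fun z : ℝ => 1 - z^2) (-(2*y^1)) y := by
    have := (hasDerivAt_pow 2 y).const_sub 1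
    simpa using this
  have d2 : HasDerivAt (fun z : ℝ => Real.sqrt (1 - z^2)) (1/(2*s) * -(2*y^1)) y := by
    have h := (Real.hasDerivAt_sqrt (ne_of_gt hy2)).comp y d1
    simpa [hs_def, Function.comp_def] using h
  have d3 := hasDerivAt_Tf hy
  have d4 := Real.hasDerivAt_arcsin hy'.1.ne' hy'.2.ne
  have dF := (d2.mul d3).sub d4
  refine dF.congr_deriv ?_
  symm
  have hode := ode hy
  rw [← hs_def]
  set T' := ∑' k : ℕ, (2*(k:ℝ)+1) * c k * y^(2*k) with hT'
  have hsne : s ≠ 0 := ne_of_gt hs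
  have key : s^2 * T' = 1 + y * Tf y := by rw [hs2]; exact hode
  field_simp
  linear_combination (-1) * key

lemma F_const {x : ℝ} (hx : |x| < 1) :
    Real.sqrt (1 - x^2) * Tf x - Real.arcsin x = 0 := by
  set F : ℝ → ℝ := fun z => Real.sqrt (1 - z^2) * Tf z - Real.arcsin z with hFdef
  have hF0 : F 0 = 0 := by simp [hFdef, Tf_zero]
  have hx' := abs_lt.mp hx
  have habs : ∀ y : ℝ, min 0 x ≤ y → y ≤ max 0 x → |y| < 1 := by
    intro y h1 h2
    rw [abs_lt]
    constructor
    · calc (-1:ℝ) < min 0 x := by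
            rcases le_total 0 x with h | h
            · simp [min_eq_left h]
            · simp [min_eq_right h]; linarith
        _ ≤ y := h1
    · calc y ≤ max 0 x := h2
        _ < 1 := by
            rcases le_total 0 x with h | h
            · simp [max_eq_right h]; linarith
            · simp [max_eq_left h]
  rcases le_total 0 x with h | h
  · have hc : ∀ y ∈ Icc (0:ℝ) x, |y| < 1 := fun y hy =>
      habs y (le_trans (min_le_left _ _) hy.1) (le_trans hy.2 (le_max_right _ _))
    have := constant_of_has_deriv_right_zero (f := F) (a := 0) (b := x)
      (fun y hy => (hasDerivAt_F (hc y hy)).continuousAt.continuousWithinAt)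
      (fun y hy => (hasDerivAt_F (hc y (Ico_subset_Icc_self hy))).hasDerivWithinAt)
    have hxm : x ∈ Icc (0:ℝ) x := ⟨h, le_refl x⟩
    rw [← hF0]
    exact this x hxm
  · have hc : ∀ y ∈ Icc x (0:ℝ), |y| < 1 := fun y hy =>
      habs y (le_trans (min_le_right _ _) hy.1) (le_trans hy.2 (le_max_left _ _))
    have := constant_of_has_deriv_right_zero (f := F) (a := x) (b := 0)
      (fun y hy => (hasDerivAt_F (hc y hy)).continuousAt.continuousWithinAt)
      (fun y hy => (hasDerivAt_F (hc y (Ico_subset_Icc_self hy))).hasDerivWithinAt)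
    have h0m : (0:ℝ) ∈ Icc x (0:ℝ) := ⟨h, le_refl 0⟩
    have := this 0 h0m
    rw [hF0] at this
    exact this.symm

lemma T_eq {x : ℝ} (hx : |x| < 1) :
    Real.sqrt (1 - x^2) * Tf x = Real.arcsin x := by
  have := F_const hx
  linarith

noncomputable def Sf (x : ℝ) : ℝ :=
  ∑' k : ℕ, (2 * x) ^ (2 * (k + 1)) / (((k : ℝ) + 1) ^ 2 * cb k)

lemma Sterm (k : ℕ) (x : ℝ) :
    (2 * x) ^ (2 * (k + 1)) / (((k : ℝ) + 1) ^ 2 * cb k)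
      = (2 / ((k : ℝ) + 1)) * c k * x ^ (2 * k + 2) := by
  have hcb := cb_pos k
  have hk : ((k : ℝ) + 1) ≠ 0 := by positivity
  rw [mul_pow, c, show 2 * (k + 1) = 2 * k + 2 from by ring]
  field_simp
  ring

lemma Sf_zero : Sf 0 = 0 := by
  unfold Sf
  convert tsum_zero with k
  norm_num

lemma hasDerivAt_Sf {x : ℝ} (hx : |x| < 1) : HasDerivAt Sf (4 * Tf x) x := by
  have hSfeq : Sf = fun y => ∑' k : ℕ, (2 / ((k : ℝ) + 1)) * c k * y ^ (2 * k + 2) := by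
    funext y
    unfold Sf
    exact tsum_congr fun k => Sterm k y
  rw [hSfeq]
  have h4T : (4 : ℝ) * Tf x = ∑' k : ℕ, 4 * c k * x ^ (2 * k + 1) := by
    unfold Tf
    rw [← tsum_mul_left]
    exact tsum_congr fun k => by ring
  rw [h4T]
  set r : ℝ := (|x| + 1) / 2 with hr_def
  have hr0 : 0 < r := by positivity
  have hxr : |x| < r := by rw [hr_def]; linarith
  have hr1 : r < 1 := by rw [hr_def]; linarith
  apply hasDerivAt_tsum_of_isPreconnected
    (u := fun k : ℕ => 4 * (r ^ 2) ^ k)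
    (t := Set.Ioo (-r) r) (y₀ := 0)
    (g' := fun (k : ℕ) (y : ℝ) => 4 * c k * y ^ (2 * k + 1))
  · exact (summable_geometric_of_lt_one (by positivity) (by nlinarith)).mul_left 4
  · exact isOpen_Ioo
  · exact (convex_Ioo _ _).isPreconnected
  · intro k y _
    have h := (hasDerivAt_pow (2*k+2) y).const_mul ((2 / ((k : ℝ) + 1)) * c k)
    refine h.congr_deriv ?_
    rw [show 2*k+2-1 = 2*k+1 from rfl]
    have hk : ((k : ℝ) + 1) ≠ 0 := by positivity
    push_cast
    field_simp
    ring
  · intro k y hy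
    have hyr : |y| < r := abs_lt.mpr ⟨hy.1, hy.2⟩
    rw [Real.norm_eq_abs, abs_mul, abs_mul]
    have h2 : |c k| ≤ 1 := by rw [abs_of_pos (c_pos k)]; exact c_le_one k
    have h3 : |y ^ (2*k+1)| ≤ r ^ (2*k) := by
      rw [abs_pow]
      calc |y| ^ (2*k+1) ≤ r ^ (2*k+1) := pow_le_pow_left₀ (abs_nonneg y) hyr.le _
        _ ≤ r ^ (2*k) * 1 := by
            rw [pow_succ]
            exact mul_le_mul_of_nonneg_left hr1.le (by positivity)
        _ = r ^ (2*k) := mul_one _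
    calc |(4:ℝ)| * |c k| * |y^(2*k+1)| ≤ 4 * 1 * r^(2*k) := by
          apply mul_le_mul _ h3 (abs_nonneg _) (by positivity)
          rw [abs_of_pos (by norm_num : (0:ℝ) < 4)]
          exact mul_le_mul_of_nonneg_left h2 (by norm_num)
      _ = 4 * (r^2)^k := by rw [← pow_mul]; ring
  · exact ⟨by linarith, by linarith⟩
  · apply Summable.congr summable_zero
    intro k; simp
  · exact ⟨by linarith [neg_abs_le x, abs_lt.mp hxr], (abs_lt.mp hxr).2⟩

lemma interior_eq {x : ℝ} (hx : |x| < 1) : Sf x = 2 * Real.arcsin x ^ 2 := by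
  set G : ℝ → ℝ := fun z => Sf z - 2 * Real.arcsin z ^ 2 with hGdef
  have hG0 : G 0 = 0 := by simp [hGdef, Sf_zero]
  have hder : ∀ y : ℝ, |y| < 1 → HasDerivAt G 0 y := by
    intro y hy
    have hy' := abs_lt.mp hy
    have hy2 : 0 < 1 - y^2 := by nlinarith [sq_abs y, abs_nonneg y]
    have hs : 0 < Real.sqrt (1 - y^2) := Real.sqrt_pos.mpr hy2
    have d1 := hasDerivAt_Sf hy
    have d2 : HasDerivAt (fun z => 2 * Real.arcsin z ^ 2)
        (2 * (2 * Real.arcsin y ^ 1 * (1 / Real.sqrt (1 - y^2)))) y := by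
      exact ((Real.hasDerivAt_arcsin hy'.1.ne' hy'.2.ne).pow 2).const_mul 2
    have dG := d1.sub d2
    refine dG.congr_deriv ?_
    symm
    have hTeq := T_eq hy
    have hsne : Real.sqrt (1 - y^2) ≠ 0 := ne_of_gt hs
    field_simp
    linear_combination (-4 : ℝ) * hTeq
  have habs : ∀ y : ℝ, min 0 x ≤ y → y ≤ max 0 x → |y| < 1 := by
    intro y h1 h2
    have hx' := abs_lt.mp hx
    rw [abs_lt]
    constructor
    · calc (-1:ℝ) < min 0 x := by
            rcases le_total 0 x with h | h
            · simp [min_eq_left h]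
            · simp [min_eq_right h]; linarith
        _ ≤ y := h1
    · calc y ≤ max 0 x := h2
        _ < 1 := by
            rcases le_total 0 x with h | h
            · simp [max_eq_right h]; linarith
            · simp [max_eq_left h]
  have : G x = 0 := by
    rcases le_total 0 x with h | h
    · have hc : ∀ y ∈ Icc (0:ℝ) x, |y| < 1 := fun y hy =>
        habs y (le_trans (min_le_left _ _) hy.1) (le_trans hy.2 (le_max_right _ _))
      have := constant_of_has_deriv_right_zero (f := G) (a := 0) (b := x)
        (fun y hy => (hder y (hc y hy)).continuousAt.continuousWithinAt)
        (fun y hy => (hder y (hc y (Ico_subset_Icc_self hy))).hasDerivWithinAt)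
      rw [← hG0]
      exact this x ⟨h, le_refl x⟩
    · have hc : ∀ y ∈ Icc x (0:ℝ), |y| < 1 := fun y hy =>
        habs y (le_trans (min_le_right _ _) hy.1) (le_trans hy.2 (le_max_left _ _))
      have := constant_of_has_deriv_right_zero (f := G) (a := x) (b := 0)
        (fun y hy => (hder y (hc y hy)).continuousAt.continuousWithinAt)
        (fun y hy => (hder y (hc y (Ico_subset_Icc_self hy))).hasDerivWithinAt)
      have h2 := this 0 ⟨h, le_refl 0⟩
      rw [hG0] at h2
      exact h2.symm
  have := this
  simp only [hGdef] at this
  linarith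

lemma summable_u : Summable (fun k : ℕ => 2 * Real.sqrt ((k:ℝ)+1) / ((k:ℝ)+1)^2) := by
  have h0 : Summable (fun n : ℕ => ((n:ℝ)) ^ (-(3/2) : ℝ)) :=
    Real.summable_nat_rpow.mpr (by norm_num)
  have h1 : Summable (fun n : ℕ => (((n:ℝ)+1)) ^ (-(3/2) : ℝ)) := by
    have := (summable_nat_add_iff 1).mpr h0
    refine this.congr fun n => ?_
    push_cast
    ring_nf
  have h2 := h1.mul_left 2
  refine h2.congr fun k => ?_
  have hpos : (0:ℝ) < (k:ℝ)+1 := by positivity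
  have he : ((k:ℝ)+1) ^ (-(3/2) : ℝ) = Real.sqrt ((k:ℝ)+1) / ((k:ℝ)+1)^2 := by
    rw [Real.sqrt_eq_rpow, show (-(3/2) : ℝ) = 1/2 - 2 by norm_num, Real.rpow_sub hpos]
    congr 1
    rw [← Real.rpow_natCast ((k:ℝ)+1) 2]
    norm_num
  rw [he]
  ring

lemma contSf : ContinuousOn Sf (Icc (-1:ℝ) 1) := by
  apply continuousOn_tsum (u := fun k : ℕ => 2 * Real.sqrt ((k:ℝ)+1) / ((k:ℝ)+1)^2)
  · intro k
    apply Continuous.continuousOn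
    exact ((continuous_const.mul continuous_id).pow _).div_const _
  · exact summable_u
  · intro k y hy
    have hy1 : |y| ≤ 1 := abs_le.mpr ⟨hy.1, hy.2⟩
    have hcb := cb_pos k
    have hk1 : (0:ℝ) < ((k:ℝ)+1)^2 := by positivity
    rw [Real.norm_eq_abs, abs_div, abs_pow]
    rw [abs_of_pos (by positivity : (0:ℝ) < ((k:ℝ)+1)^2 * cb k)]
    have hnum : |2*y| ^ (2*(k+1)) ≤ (4:ℝ)^(k+1) := by
      calc |2*y| ^ (2*(k+1)) ≤ 2 ^ (2*(k+1)) := by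
            apply pow_le_pow_left₀ (abs_nonneg _)
            rw [abs_mul]
            calc |(2:ℝ)| * |y| ≤ 2 * 1 := by
                  rw [abs_of_pos (by norm_num : (0:ℝ) < 2)]
                  exact mul_le_mul_of_nonneg_left hy1 (by norm_num)
              _ = 2 := mul_one 2
        _ = (4:ℝ)^(k+1) := by
            rw [show (4:ℝ) = 2^2 by norm_num, ← pow_mul]
    have hden : (4:ℝ)^(k+1) / (((k:ℝ)+1)^2 * cb k) ≤ 2 * Real.sqrt ((k:ℝ)+1) / ((k:ℝ)+1)^2 := by
      rw [div_le_div_iff₀ (by positivity) hk1]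
      calc (4:ℝ)^(k+1) * ((k:ℝ)+1)^2 ≤ (2 * Real.sqrt ((k:ℝ)+1) * cb k) * ((k:ℝ)+1)^2 := by
            apply mul_le_mul_of_nonneg_right _ hk1.le
            have := sqrt_bound k
            convert this using 3
        _ = 2 * Real.sqrt ((k:ℝ)+1) * (((k:ℝ)+1)^2 * cb k) := by ring
    refine le_trans ?_ hden
    gcongr

/-- For `|x| ≤ 1`, `∑_{k≥1} (2x)^{2k}/(k² C(2k,k)) = 2 (arcsin x)²`. -/
theorem stmt_14 (x : ℝ) (hx : |x| ≤ 1) :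
    ∑' k : ℕ, (2 * x) ^ (2 * (k + 1)) /
        (((k + 1 : ℝ)) ^ 2 * (Nat.choose (2 * (k + 1)) (k + 1) : ℝ)) =
      2 * Real.arcsin x ^ 2 := by
  have hgoal : Sf x = 2 * Real.arcsin x ^ 2 := by
    rcases lt_or_eq_of_le hx with h | h
    · exact interior_eq h
    · have hIcc : x ∈ Icc (-1:ℝ) 1 := abs_le.mp hx
      have hxcl : x ∈ closure (Ioo (-1:ℝ) 1) := by
        rw [closure_Ioo (by norm_num : (-1:ℝ) ≠ 1)]
        exact hIcc
      have hne : (𝓝[Ioo (-1:ℝ) 1] x).NeBot := mem_closure_iff_nhdsWithin_neBot.mp hxcl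
      have t1 : Tendsto Sf (𝓝[Ioo (-1:ℝ) 1] x) (𝓝 (Sf x)) :=
        (contSf x hIcc).mono Ioo_subset_Icc_self
      have t2 : Tendsto (fun y => 2 * Real.arcsin y ^ 2) (𝓝[Ioo (-1:ℝ) 1] x)
          (𝓝 (2 * Real.arcsin x ^ 2)) :=
        (continuous_const.mul (Real.continuous_arcsin.pow 2)).continuousAt.continuousWithinAt
      have t1' : Tendsto Sf (𝓝[Ioo (-1:ℝ) 1] x) (𝓝 (2 * Real.arcsin x ^ 2)) := by
        apply t2.congr'
        filter_upwards [eventually_mem_nhdsWithin] with y hy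
        exact (interior_eq (abs_lt.mpr ⟨hy.1, hy.2⟩)).symm
      exact tendsto_nhds_unique t1 t1'
  rw [← hgoal]
  unfold Sf cb
  norm_num
end
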